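/- Let A ∈ B(H'), B ∈ B(H), X ∈ B(H,H') with C = AX − XB. If C has finite rank at most v, then for any polynomials p, q of degree at most k, the operator p(A) X q(B) − q(A) X p(B) has rank at most vk. -/

import Mathlib

open ContinuousLinearMap Polynomial


section aux
variable {H H' : Type*} [NormedAddCommGroup H] [NormedSpace ℂ H]
    [NormedAddCommGroup H'] [NormedSpace ℂ H']

theorem pow_syl (A : H' →L[ℂ] H') (B : H →L[ℂ] H) (X C : H →L[ℂ] H')
    (hC : C = A.comp X - X.comp B) (n : ℕ) :
    (A^n).comp X - X.comp (B^n) =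
      ∑ j ∈ Finset.range n, (A^j).comp (C.comp (B^(n-1-j))) := by
  induction n with
  | zero => ext x; simp
  | succ n ih =>
    have key : (A^(n+1)).comp X - X.comp (B^(n+1)) =
        A.comp ((A^n).comp X - X.comp (B^n)) + C.comp (B^n) := by
      rw [hC]; ext x
      simp [pow_succ', comp_apply, sub_apply, add_apply, map_sub]
    rw [key, ih, comp_finset_sum,
      Finset.sum_range_succ' (fun j => (A^j).comp (C.comp (B^(n+1-1-j))))]
    congr 1
    apply Finset.sum_congr rfl
    intro j hj
    rw [Finset.mem_range] at hj
    have h1 : n - 1 - j = n + 1 - 1 - (j + 1) := by omega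
    rw [← h1, ← ContinuousLinearMap.comp_assoc, ← ContinuousLinearMap.mul_def, ← pow_succ']

theorem poly_syl (A : H' →L[ℂ] H') (B : H →L[ℂ] H) (X C : H →L[ℂ] H')
    (hC : C = A.comp X - X.comp B) (k : ℕ) (r : Polynomial ℂ) (hr : r.natDegree ≤ k) :
    (aeval A r).comp X - X.comp (aeval B r) =
      ∑ j ∈ Finset.range k, (A^j).comp (C.comp
        (∑ i ∈ Finset.Ico (j+1) (k+1), r.coeff i • B^(i-1-j))) := by
  have hk : r.natDegree < k + 1 := Nat.lt_succ_of_le hr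
  have e1 : (aeval A r).comp X - X.comp (aeval B r)
      = ∑ i ∈ Finset.range (k+1), r.coeff i • ((A^i).comp X - X.comp (B^i)) := by
    rw [aeval_eq_sum_range' hk, aeval_eq_sum_range' hk]
    ext x
    simp [ContinuousLinearMap.sum_apply, smul_sub, sub_apply, comp_apply, Finset.sum_sub_distrib, map_sum]
  rw [e1]
  have e2 : ∀ i ∈ Finset.range (k+1), r.coeff i • ((A^i).comp X - X.comp (B^i))
      = ∑ j ∈ Finset.range i, r.coeff i • ((A^j).comp (C.comp (B^(i-1-j)))) := by
    intro i _
    rw [pow_syl A B X C hC i, Finset.smul_sum]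
  rw [Finset.sum_congr rfl e2]
  have e3 := Finset.sum_Ico_Ico_comm' 0 (k+1)
    (fun j i => r.coeff i • ((A^j).comp (C.comp (B^(i-1-j)))))
  simp only [Finset.range_eq_Ico]
  rw [← e3, Finset.sum_Ico_succ_top (Nat.zero_le _)]
  simp only [Finset.Ico_self, Finset.sum_empty, add_zero]
  rw [← Finset.range_eq_Ico]
  apply Finset.sum_congr rfl
  intro j hj
  rw [comp_finset_sum, comp_finset_sum]
  apply Finset.sum_congr rfl
  intro i hi
  rw [ContinuousLinearMap.comp_smul, ContinuousLinearMap.comp_smul]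
end aux

theorem rank_finset_sum_le {R M N : Type*} [DivisionRing R] [AddCommGroup M] [Module R M]
    [AddCommGroup N] [Module R N] {ι : Type*} (s : Finset ι) (f : ι → (M →ₗ[R] N)) :
    LinearMap.rank (∑ j ∈ s, f j) ≤ ∑ j ∈ s, LinearMap.rank (f j) := by
  induction s using Finset.cons_induction with
  | empty => simp
  | cons a s ha ih =>
    rw [Finset.sum_cons, Finset.sum_cons]
    exact le_trans (LinearMap.rank_add_le _ _) (add_le_add le_rfl ih)

theorem sylvester_polynomial_rank_bound
    {H H' : Type*} [NormedAddCommGroup H] [InnerProductSpace ℂ H] [CompleteSpace H]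
    [NormedAddCommGroup H'] [InnerProductSpace ℂ H'] [CompleteSpace H']
    (A : H' →L[ℂ] H') (B : H →L[ℂ] H) (X : H →L[ℂ] H')
    (C : H →L[ℂ] H') (hC : C = A.comp X - X.comp B)
    (v k : ℕ)
    (hrank : LinearMap.rank (C : H →ₗ[ℂ] H') ≤ (v : Cardinal))
    (p q : Polynomial ℂ) (hp : p.natDegree ≤ k) (hq : q.natDegree ≤ k) :
    LinearMap.rank
      (((aeval A p).comp (X.comp (aeval B q)) -
        (aeval A q).comp (X.comp (aeval B p)) : H →L[ℂ] H') : H →ₗ[ℂ] H')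
      ≤ ((v * k : ℕ) : Cardinal) := by
  set Tp : ℕ → (H →L[ℂ] H) :=
    fun j => ∑ i ∈ Finset.Ico (j+1) (k+1), p.coeff i • B^(i-1-j) with hTp
  set Tq : ℕ → (H →L[ℂ] H) :=
    fun j => ∑ i ∈ Finset.Ico (j+1) (k+1), q.coeff i • B^(i-1-j) with hTq
  have hp' := poly_syl A B X C hC k p hp
  have hq' := poly_syl A B X C hC k q hq
  have comm : (aeval B p).comp (aeval B q) = (aeval B q).comp (aeval B p) := by
    rw [← ContinuousLinearMap.mul_def, ← ContinuousLinearMap.mul_def,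
      ← map_mul, ← map_mul, mul_comm]
  have commx : ∀ x, (aeval B p) ((aeval B q) x) = (aeval B q) ((aeval B p) x) :=
    fun x => DFunLike.congr_fun comm x
  have main : ((aeval A p).comp (X.comp (aeval B q)) -
        (aeval A q).comp (X.comp (aeval B p)) : H →L[ℂ] H') =
      ∑ j ∈ Finset.range k, (A^j).comp (C.comp
        ((Tp j).comp (aeval B q) - (Tq j).comp (aeval B p))) := by
    have decomp : ((aeval A p).comp (X.comp (aeval B q)) -
          (aeval A q).comp (X.comp (aeval B p)) : H →L[ℂ] H') =
        ((aeval A p).comp X - X.comp (aeval B p)).comp (aeval B q)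
          - ((aeval A q).comp X - X.comp (aeval B q)).comp (aeval B p) := by
      ext x
      simp only [ContinuousLinearMap.sub_apply, ContinuousLinearMap.comp_apply,
        ContinuousLinearMap.sub_comp, map_sub]
      rw [commx]
      abel
    rw [decomp, hp', hq', finset_sum_comp, finset_sum_comp, ← Finset.sum_sub_distrib]
    apply Finset.sum_congr rfl
    intro j _
    ext x
    simp [hTp, hTq, ContinuousLinearMap.comp_apply, ContinuousLinearMap.sub_apply, map_sub,
      ContinuousLinearMap.sum_apply, map_sum, map_smul, ContinuousLinearMap.smul_apply]
  rw [main]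
  have coe_eq : ((∑ j ∈ Finset.range k, (A^j).comp (C.comp
        ((Tp j).comp (aeval B q) - (Tq j).comp (aeval B p))) : H →L[ℂ] H') : H →ₗ[ℂ] H')
      = ∑ j ∈ Finset.range k, ((A^j : H' →L[ℂ] H') : H' →ₗ[ℂ] H').comp
          (((C : H →L[ℂ] H') : H →ₗ[ℂ] H').comp
            (((((Tp j).comp (aeval B q) - (Tq j).comp (aeval B p))) : H →L[ℂ] H) : H →ₗ[ℂ] H)) := by
    push_cast [ContinuousLinearMap.coe_sum, ContinuousLinearMap.coe_comp]
    rfl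
  rw [coe_eq]
  refine le_trans (rank_finset_sum_le _ _) ?_
  have hterm : ∀ j ∈ Finset.range k,
      LinearMap.rank (((A^j : H' →L[ℂ] H') : H' →ₗ[ℂ] H').comp
          (((C : H →L[ℂ] H') : H →ₗ[ℂ] H').comp
            (((((Tp j).comp (aeval B q) - (Tq j).comp (aeval B p))) : H →L[ℂ] H) : H →ₗ[ℂ] H)))
        ≤ (v : Cardinal) := by
    intro j _
    refine le_trans (LinearMap.rank_comp_le_right _ _) ?_
    exact le_trans (LinearMap.rank_comp_le_left _ _) hrank
  refine le_trans (Finset.sum_le_sum hterm) ?_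
  simp only [Finset.sum_const, Finset.card_range, nsmul_eq_mul, Nat.cast_mul]
  rw [mul_comm]
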